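/- Let g(x) with g(0)=1 satisfy g(x) = 1 + x·g(x)·B(x²·g(x)) where B(x) = Σ_{i≥0} b_i xⁱ. Then [x³] g(x)^m = C(m+2,3)·b_0³ + m·b_1, and [x⁴] g(x)^m = C(m+3,4)·b_0⁴ + m(m+2)·b_0·b_1, and [x⁵] g(x)^m = C(m+4,5)·b_0⁵ + m·C(m+3,2)·b_0²·b_1 + m·b_2. -/

import Mathlib

open PowerSeries

/-- Substitution of the power series `g` (with zero constant term) into `f`. -/
noncomputable def pscomp (f g : PowerSeries ℚ) : PowerSeries ℚ :=
  PowerSeries.mk fun N => ∑ n ∈ Finset.range (N + 1), coeff n f * coeff N (g ^ n)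

lemma cm_aux (f h : PowerSeries ℚ) (n : ℕ) :
    coeff n (f * h) = ∑ i ∈ Finset.range (n+1), coeff i f * coeff (n-i) h := by
  rw [coeff_mul, Finset.Nat.sum_antidiagonal_eq_sum_range_succ_mk]

lemma ch2_aux (m : ℕ) : (((m+1).choose 2 : ℕ) : ℚ) = m*(m+1)/2 := by
  induction m with
  | zero => simp
  | succ n ih =>
    rw [show n+1+1 = (n+1)+1 from rfl, Nat.choose_succ_succ]
    push_cast [Nat.choose_one_right, ih]; ring

lemma ch3_aux (m : ℕ) : (((m+2).choose 3 : ℕ) : ℚ) = m*(m+1)*(m+2)/6 := by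
  induction m with
  | zero => simp
  | succ n ih =>
    rw [show n+1+2 = (n+2)+1 from rfl, Nat.choose_succ_succ]
    push_cast [ch2_aux (n+1), ih]; ring

lemma ch4_aux (m : ℕ) : (((m+3).choose 4 : ℕ) : ℚ) = m*(m+1)*(m+2)*(m+3)/24 := by
  induction m with
  | zero => simp
  | succ n ih =>
    rw [show n+1+3 = (n+3)+1 from rfl, Nat.choose_succ_succ]
    push_cast [ch3_aux (n+1), ih]; ring

lemma ch5_aux (m : ℕ) : (((m+4).choose 5 : ℕ) : ℚ) = m*(m+1)*(m+2)*(m+3)*(m+4)/120 := by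
  induction m with
  | zero => simp
  | succ n ih =>
    rw [show n+1+4 = (n+4)+1 from rfl, Nat.choose_succ_succ]
    push_cast [ch4_aux (n+1), ih]; ring

theorem stmt_10 (B g : PowerSeries ℚ) (hg0 : constantCoeff g = 1)
    (hg : g = 1 + X * g * pscomp B (X ^ 2 * g)) (m : ℕ) (hm : 1 ≤ m) :
    coeff 3 (g ^ m) =
        (Nat.choose (m + 2) 3 : ℚ) * (coeff 0 B) ^ 3 + m * coeff 1 B ∧
    coeff 4 (g ^ m) =
        (Nat.choose (m + 3) 4 : ℚ) * (coeff 0 B) ^ 4 +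
          m * (m + 2) * coeff 0 B * coeff 1 B ∧
    coeff 5 (g ^ m) =
        (Nat.choose (m + 4) 5 : ℚ) * (coeff 0 B) ^ 5 +
          m * (Nat.choose (m + 3) 2 : ℚ) * (coeff 0 B) ^ 2 * coeff 1 B +
          m * coeff 2 B := by
  set b0 := coeff 0 B with hb0
  set b1 := coeff 1 B with hb1
  set b2 := coeff 2 B with hb2
  set P := pscomp B (X ^ 2 * g) with hPdef
  have key : ∀ N, coeff N P = ∑ n ∈ Finset.range (N+1),
      coeff n B * (if 2*n ≤ N then coeff (N - 2*n) (g^n) else 0) := by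
    intro N
    simp only [hPdef, pscomp, coeff_mk]
    refine Finset.sum_congr rfl fun n _ => ?_
    rw [mul_pow, ← pow_mul, coeff_X_pow_mul']
  have hc0 : coeff 0 g = 1 := by rw [coeff_zero_eq_constantCoeff, hg0]
  have hP0 : coeff 0 P = b0 := by rw [key]; simp [hb0]
  have hP1 : coeff 1 P = 0 := by rw [key]; simp [Finset.sum_range_succ]
  have hP2 : coeff 2 P = b1 := by
    rw [key]; simp [Finset.sum_range_succ, hc0, hb1]
  have hP3 : coeff 3 P = b1 * coeff 1 g := by
    rw [key]; simp [Finset.sum_range_succ, hb1]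
  have hP4 : coeff 4 P = b1 * coeff 2 g + b2 := by
    rw [key]
    simp [Finset.sum_range_succ, hb1, hb2, coeff_zero_eq_constantCoeff, map_pow, hg0]
  have hgrec : ∀ n, coeff (n+1) g =
      ∑ i ∈ Finset.range (n+1), coeff i g * coeff (n-i) P := by
    intro n
    conv_lhs => rw [hg]
    rw [map_add, mul_assoc, coeff_succ_X_mul, cm_aux]
    simp
  have hc1 : coeff 1 g = b0 := by rw [hgrec]; simp [hc0, hP0]
  have hc2 : coeff 2 g = b0^2 := by
    rw [hgrec]; simp [Finset.sum_range_succ, hc0, hc1, hP0, hP1]; ring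
  have hc3 : coeff 3 g = b0^3 + b1 := by
    rw [hgrec]; simp [Finset.sum_range_succ, hc0, hc1, hc2, hP0, hP1, hP2]; ring
  have hc4 : coeff 4 g = b0^4 + 3*b0*b1 := by
    rw [hgrec]; simp [Finset.sum_range_succ, hc0, hc1, hc2, hc3, hP0, hP1, hP2, hP3]; ring
  have hc5 : coeff 5 g = b0^5 + 6*b0^2*b1 + b2 := by
    rw [hgrec]; simp [Finset.sum_range_succ, hc0, hc1, hc2, hc3, hc4, hP0, hP1, hP2, hP3, hP4]
    ring
  have main : ∀ k : ℕ, coeff 0 (g^k) = 1 ∧ coeff 1 (g^k) = k*b0 ∧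
      coeff 2 (g^k) = k*(k+1)/2*b0^2 ∧
      coeff 3 (g^k) = k*(k+1)*(k+2)/6*b0^3 + k*b1 ∧
      coeff 4 (g^k) = k*(k+1)*(k+2)*(k+3)/24*b0^4 + k*(k+2)*b0*b1 ∧
      coeff 5 (g^k) = k*(k+1)*(k+2)*(k+3)*(k+4)/120*b0^5 + k*(k+2)*(k+3)/2*b0^2*b1 + k*b2 := by
    intro k
    induction k with
    | zero => simp
    | succ n ih =>
      obtain ⟨i0, i1, i2, i3, i4, i5⟩ := ih
      have e : ∀ j, coeff j (g^(n+1)) =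
          ∑ i ∈ Finset.range (j+1), coeff i (g^n) * coeff (j-i) g := by
        intro j; rw [pow_succ, cm_aux]
      refine ⟨?_, ?_, ?_, ?_, ?_, ?_⟩ <;>
        · rw [e]
          simp only [Finset.sum_range_succ, Finset.sum_range_zero]
          norm_num [i0, i1, i2, i3, i4, i5, hc0, hc1, hc2, hc3, hc4, hc5] <;>
            (push_cast; ring)
  obtain ⟨_, _, _, h3, h4, h5⟩ := main m
  have hch2 : ((m+3).choose 2 : ℚ) = (m+2)*(m+3)/2 := by
    rw [show m+3 = (m+2)+1 from rfl, ch2_aux]; push_cast; ring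
  refine ⟨?_, ?_, ?_⟩
  · rw [h3, ch3_aux]
  · rw [h4, ch4_aux]
  · rw [h5, ch5_aux, hch2]; ring
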